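/- Under the two-element tensor-product SBP–SAT setting with central coupling (σ = 0), define the interface restriction operators R_{ξN,L} = e_{N_{ξ,L}}ᵀ ⊗ I and R_{ξ1,R} = e_1ᵀ ⊗ I, the interface traces u_{L,N} = R_{ξN,L} u_L and u_{R,1} = R_{ξ1,R} u_R, and the Kozdon–Wilcox operators P_{G2L} = H_{η,L}^{−1} (R_L^{1D})ᵀ M_Γ and P_{R2G} = R_R^{1D}, where H_{η,L} is invertible. Then for all u_L, u_R the SAT of the left element coincides with the Kozdon–Wilcox SAT: λ E_{ξN,L} u_L − f*_L = (λ/2)( E_{ξN,L} u_L − R_Lᵀ M_Γ R_R u_R ) = (λ/2) R_{ξN,L}ᵀ H_{η,L} ( u_{L,N} − P_{G2L} P_{R2G} u_{R,1} ). -/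

import Mathlib

open Matrix
open scoped Kronecker

noncomputable section

/-- Boundary matrix `e_i e_iᵀ` built from the `i`-th standard basis vector. -/
def bmat {n : ℕ} (i : Fin n) : Matrix (Fin n) (Fin n) ℝ :=
  vecMulVec (Pi.single i 1) (Pi.single i 1)

/-- Two-dimensional projection `e_iᵀ ⊗ R1` onto the intermediate interface grid:
it restricts the solution to the face `ξ`-index `i` and applies the
one-dimensional projection `R1`. -/
def proj2D {nx ny NΓ : ℕ} (i : Fin nx) (R1 : Matrix (Fin NΓ) (Fin ny) ℝ) :
    Matrix (Fin NΓ) (Fin nx × Fin ny) ℝ :=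
  Matrix.of fun g q => (if q.1 = i then 1 else 0) * R1 g q.2

/-- Interface restriction operator `e_iᵀ ⊗ I`: it restricts a grid function on
the element to the face with `ξ`-index `i`. -/
def restrict2D {nx ny : ℕ} (i : Fin nx) :
    Matrix (Fin ny) (Fin nx × Fin ny) ℝ :=
  Matrix.of fun b q => (if q.1 = i then 1 else 0) * (if q.2 = b then 1 else 0)

/-- **Equivalence with the Kozdon–Wilcox SAT for central coupling (`σ = 0`).**
In the two-element tensor-product SBP–SAT setting with central coupling, the
SAT of the left element coincides with the Kozdon–Wilcox SAT built from the
glue-grid operators `P_{G2L} = H_{η,L}⁻¹ (R_L^{1D})ᵀ M_Γ` and `P_{R2G} = R_R^{1D}`. -/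
theorem nonconforming_sat_eq_kozdon_wilcox
    {nxL nyL nxR nyR NΓ : ℕ}
    -- norm matrices (diagonal with positive entries); H_{η,L} invertible
    (HyL : Matrix (Fin (nyL + 1)) (Fin (nyL + 1)) ℝ)
    (HyR : Matrix (Fin (nyR + 1)) (Fin (nyR + 1)) ℝ)
    (hHyLd : HyL.IsDiag) (hHyLp : ∀ i, 0 < HyL i i)
    (hHyRd : HyR.IsDiag) (hHyRp : ∀ i, 0 < HyR i i)
    (hHyLinv : IsUnit HyL.det)
    -- intermediate (glue) grid with symmetric norm matrix
    (MΓ : Matrix (Fin NΓ) (Fin NΓ) ℝ) (hMΓ : MΓᵀ = MΓ)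
    (RL1 : Matrix (Fin NΓ) (Fin (nyL + 1)) ℝ)
    (RR1 : Matrix (Fin NΓ) (Fin (nyR + 1)) ℝ)
    -- two-dimensional surface operator and projections
    (ExNL : Matrix (Fin (nxL + 1) × Fin (nyL + 1)) (Fin (nxL + 1) × Fin (nyL + 1)) ℝ)
    (hExNL : ExNL = bmat (Fin.last nxL) ⊗ₖ HyL)
    (RL : Matrix (Fin NΓ) (Fin (nxL + 1) × Fin (nyL + 1)) ℝ)
    (hRL : RL = proj2D (Fin.last nxL) RL1)
    (RR : Matrix (Fin NΓ) (Fin (nxR + 1) × Fin (nyR + 1)) ℝ)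
    (hRR : RR = proj2D 0 RR1)
    -- interface restriction operators and traces
    (RxNL : Matrix (Fin (nyL + 1)) (Fin (nxL + 1) × Fin (nyL + 1)) ℝ)
    (hRxNL : RxNL = restrict2D (Fin.last nxL))
    (Rx1R : Matrix (Fin (nyR + 1)) (Fin (nxR + 1) × Fin (nyR + 1)) ℝ)
    (hRx1R : Rx1R = restrict2D 0)
    (uL : Fin (nxL + 1) × Fin (nyL + 1) → ℝ)
    (uR : Fin (nxR + 1) × Fin (nyR + 1) → ℝ)
    (uLN : Fin (nyL + 1) → ℝ) (huLN : uLN = RxNL *ᵥ uL)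
    (uR1 : Fin (nyR + 1) → ℝ) (huR1 : uR1 = Rx1R *ᵥ uR)
    -- Kozdon–Wilcox glue operators
    (PG2L : Matrix (Fin (nyL + 1)) (Fin NΓ) ℝ)
    (hPG2L : PG2L = HyL⁻¹ * RL1ᵀ * MΓ)
    (PR2G : Matrix (Fin NΓ) (Fin (nyR + 1)) ℝ)
    (hPR2G : PR2G = RR1)
    -- central coupling: wave speed λ, SAT parameter σ = 0
    (lam : ℝ)
    (fL : Fin (nxL + 1) × Fin (nyL + 1) → ℝ)
    (hfL : fL = (lam / 2) • (ExNL *ᵥ uL + RLᵀ *ᵥ (MΓ *ᵥ (RR *ᵥ uR)))) :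
    lam • (ExNL *ᵥ uL) - fL =
      (lam / 2) • (ExNL *ᵥ uL - RLᵀ *ᵥ (MΓ *ᵥ (RR *ᵥ uR))) ∧
    (lam / 2) • (ExNL *ᵥ uL - RLᵀ *ᵥ (MΓ *ᵥ (RR *ᵥ uR))) =
      (lam / 2) • (RxNLᵀ *ᵥ (HyL *ᵥ (uLN - PG2L *ᵥ (PR2G *ᵥ uR1)))) := by

  subst hExNL hRL hRR hRxNL hRx1R huLN huR1 hPG2L hPR2G hfL
  have hE : (bmat (Fin.last nxL) ⊗ₖ HyL : Matrix _ _ ℝ) =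
      (restrict2D (Fin.last nxL) : Matrix (Fin (nyL + 1)) _ ℝ)ᵀ * HyL * (restrict2D (Fin.last nxL) : Matrix (Fin (nyL + 1)) _ ℝ) := by
    ext ⟨p, q⟩ ⟨p', q'⟩
    simp [bmat, restrict2D, Matrix.mul_apply, vecMulVec_apply, Pi.single_apply,
      Finset.sum_ite_eq, ite_and, Finset.mul_sum]
  have hRLf : (proj2D (Fin.last nxL) RL1 : Matrix _ _ ℝ) =
      RL1 * (restrict2D (Fin.last nxL) : Matrix (Fin (nyL + 1)) _ ℝ) := by
    ext g ⟨p, q⟩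
    simp [proj2D, restrict2D, Matrix.mul_apply, ite_and, mul_ite, mul_comm]
  have hRRf : (proj2D (0 : Fin (nxR + 1)) PR2G : Matrix _ _ ℝ) =
      PR2G * (restrict2D (0 : Fin (nxR + 1)) : Matrix (Fin (nyR + 1)) _ ℝ) := by
    ext g ⟨p, q⟩
    simp [proj2D, restrict2D, Matrix.mul_apply, ite_and, mul_ite, mul_comm]
  constructor
  · funext i
    simp [Pi.smul_apply, Pi.add_apply, Pi.sub_apply, smul_eq_mul]
    ring
  · rw [hE, hRLf, hRRf]
    rw [Matrix.transpose_mul]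
    simp only [Matrix.mulVec_mulVec, Matrix.mulVec_sub, Matrix.smul_mulVec]
    congr 1
    simp only [← Matrix.mul_assoc]
    rw [Matrix.mul_assoc ((restrict2D (Fin.last nxL))ᵀ) HyL HyL⁻¹,
      Matrix.mul_nonsing_inv _ hHyLinv, Matrix.mul_one]
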